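/- Let K : H → H be adjointable, let (T_ω)_{ω∈Ω} be an integral K-operator frame for H with bounds A, B > 0, let (Γ_ω)_{ω∈Ω} be a family of adjointable operators on H, and let (a_ω)_{ω∈Ω}, (b_ω)_{ω∈Ω} be positively confined families of real numbers (i.e. 0 < inf_ω a_ω ≤ sup_ω a_ω < ∞ and 0 < inf_ω b_ω ≤ sup_ω b_ω < ∞). Suppose there exist constants α, β with 0 ≤ α < 1/2 and 0 ≤ β < 1/2 such that for all x ∈ H, ∫_Ω ⟨a_ω T_ω x − b_ω Γ_ω x, a_ω T_ω x − b_ω Γ_ω x⟩ dμ(ω) ≤ α·∫_Ω ⟨a_ω T_ω x, a_ω T_ω x⟩ dμ(ω) + β·∫_Ω ⟨b_ω Γ_ω x, b_ω Γ_ω x⟩ dμ(ω). Then (Γ_ω)_{ω∈Ω} is an integral K-operator frame for H, with lower bound ((1−2α)·(inf_ω a_ω)² / (2(1+β)·(sup_ω b_ω)²))·A and upper bound (2(1+α)·(sup_ω a_ω)² / ((1−2β)·(inf_ω b_ω)²))·B. -/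

import Mathlib

open MeasureTheory

variable {A : Type*} [CStarAlgebra A] [PartialOrder A] [StarOrderedRing A]
variable {H : Type*} [NormedAddCommGroup H] [NormedSpace ℂ H] [SMul A H] [CStarModule A H]
variable {Ω : Type*} [MeasurableSpace Ω]

local notation "⟪" x ", " y "⟫" => inner (𝕜 := A) x y

section Auxiliary

variable {μ : Measure Ω}

private lemma my_integral_nonneg {f : Ω → A} (hf : Integrable f μ) (h : ∀ ω, 0 ≤ f ω) :
    0 ≤ ∫ ω, f ω ∂μ := by
  by_contra hcon
  set C : Set A := {a : A | 0 ≤ a} with hC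
  have hCclosed : IsClosed C := CStarAlgebra.isClosed_nonneg
  have hCconv : Convex ℝ C := fun x hx y hy s t hs ht _ =>
    add_nonneg (smul_nonneg hs hx) (smul_nonneg ht hy)
  have hnotmem : (∫ ω, f ω ∂μ) ∉ C := hcon
  clear hcon
  obtain ⟨φ, u, hφx, hφC⟩ := geometric_hahn_banach_point_closed hCconv hCclosed hnotmem
  have hu0 : u < 0 := by simpa using hφC 0 (le_refl (0:A))
  have hφnonneg : ∀ y ∈ C, 0 ≤ φ y := by
    intro y hy
    by_contra hneg
    push_neg at hneg
    have : ∀ t : ℝ, 0 < t → u < t * φ y := fun t ht => by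
      have := hφC (t • y) (smul_nonneg ht.le hy)
      simpa [_root_.map_smul, smul_eq_mul] using this
    have h2 := this ((u - 1) / φ y) (div_pos_of_neg_of_neg (by linarith) hneg)
    rw [div_mul_cancel₀ _ (ne_of_lt hneg)] at h2
    linarith [h2]
  have : φ (∫ ω, f ω ∂μ) = ∫ ω, φ (f ω) ∂μ := (ContinuousLinearMap.integral_comp_comm φ hf).symm
  have hge : 0 ≤ φ (∫ ω, f ω ∂μ) := by
    rw [this]; exact integral_nonneg fun ω => hφnonneg _ (h ω)
  linarith

private lemma my_integral_mono {f g : Ω → A} (hf : Integrable f μ) (hg : Integrable g μ)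
    (h : ∀ ω, f ω ≤ g ω) : ∫ ω, f ω ∂μ ≤ ∫ ω, g ω ∂μ := by
  rw [← sub_nonneg, ← integral_sub hg hf]
  exact my_integral_nonneg (hg.sub hf) fun ω => sub_nonneg.2 (h ω)

private lemma my_smul_le_smul {t : ℝ} (ht : 0 ≤ t) {x y : A} (h : x ≤ y) : t • x ≤ t • y := by
  have := smul_nonneg ht (sub_nonneg.2 h)
  rwa [smul_sub, sub_nonneg] at this

private lemma my_smul_le_smul_right {s t : ℝ} (hs : s ≤ t) {x : A} (hx : 0 ≤ x) :
    s • x ≤ t • x := by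
  have := smul_nonneg (sub_nonneg.2 hs) hx
  rwa [sub_smul, sub_nonneg] at this

private lemma my_inner_smul (t : ℝ) (x y : H) : ⟪t • x, t • y⟫ = (t^2) • ⟪x, y⟫ := by
  simp [CStarModule.inner_smul_left_real, smul_smul, sq]

private lemma my_inner_add_add (p q : H) :
    ⟪p + q, p + q⟫ ≤ (2:ℝ) • ⟪p, p⟫ + (2:ℝ) • ⟪q, q⟫ := by
  rw [← sub_nonneg]
  have h0 : (0:A) ≤ ⟪p - q, p - q⟫ := CStarModule.inner_self_nonneg
  have : (2:ℝ) • ⟪p, p⟫ + (2:ℝ) • ⟪q, q⟫ - ⟪p + q, p + q⟫ = ⟪p - q, p - q⟫ := by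
    simp only [CStarModule.inner_add_left, CStarModule.inner_add_right,
      CStarModule.inner_sub_left, CStarModule.inner_sub_right, two_smul]
    abel
  rw [this]; exact h0

private lemma my_inner_neg_neg (u : H) : ⟪-u, -u⟫ = ⟪u, u⟫ := by
  rw [← neg_one_smul ℝ u, CStarModule.inner_smul_left_real, CStarModule.inner_smul_right_real]
  simp

end Auxiliary


/-- `S` is an adjoint of `T` on the Hilbert `A`-module `H`:
`⟪T x, y⟫ = ⟪x, S y⟫` for all `x y`. -/
def IsAdjointOp (T S : H →L[ℂ] H) : Prop :=
  ∀ x y : H, ⟪T x, y⟫ = ⟪x, S y⟫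

/-- `(T ω)` is an integral `K`-operator frame with bounds `a`, `b`, where `Ks`
denotes the adjoint `K*` of `K`. -/
def IsIntegralKOpFrameWith (μ : Measure Ω) (Ks : H →L[ℂ] H)
    (T : Ω → H →L[ℂ] H) (a b : ℝ) : Prop :=
  0 < a ∧ 0 < b ∧ ∀ x : H,
    Integrable (fun ω => ⟪T ω x, T ω x⟫) μ ∧
    a • ⟪Ks x, Ks x⟫ ≤ ∫ ω, ⟪T ω x, T ω x⟫ ∂μ ∧
    ∫ ω, ⟪T ω x, T ω x⟫ ∂μ ≤ b • ⟪x, x⟫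

/-- `(T ω)` is an integral operator frame with bounds `a`, `b`. -/
def IsIntegralOpFrameWith (μ : Measure Ω) (T : Ω → H →L[ℂ] H) (a b : ℝ) : Prop :=
  0 < a ∧ 0 < b ∧ ∀ x : H,
    Integrable (fun ω => ⟪T ω x, T ω x⟫) μ ∧
    a • ⟪x, x⟫ ≤ ∫ ω, ⟪T ω x, T ω x⟫ ∂μ ∧
    ∫ ω, ⟪T ω x, T ω x⟫ ∂μ ≤ b • ⟪x, x⟫

/-- if `(T ω)` is an integral `K`-operator frame with bounds `a`, `b`,
`(c ω)`, `(d ω)` are positively confined real families and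
`∫ ⟪c ω • T ω x − d ω • G ω x, ⋯⟫ ≤ α ∫ ⟪c ω • T ω x, ⋯⟫ + β ∫ ⟪d ω • G ω x, ⋯⟫`
for some `0 ≤ α, β < 1/2`, then `(G ω)` is an integral `K`-operator frame with the
indicated bounds. -/
theorem integralKOpFrame_of_perturbation
    (μ : Measure Ω) (K Ks : H →L[ℂ] H) (hK : IsAdjointOp (A := A) K Ks)
    (T G : Ω → H →L[ℂ] H) (a b : ℝ)
    (hframe : IsIntegralKOpFrameWith (A := A) μ Ks T a b)
    (c d : Ω → ℝ)
    (hc0 : 0 < ⨅ ω, c ω) (hcbdd : BddAbove (Set.range c))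
    (hd0 : 0 < ⨅ ω, d ω) (hdbdd : BddAbove (Set.range d))
    (hGint : ∀ x : H, Integrable (fun ω => ⟪G ω x, G ω x⟫) μ)
    (hint1 : ∀ x : H, Integrable
      (fun ω => ⟪c ω • T ω x - d ω • G ω x, c ω • T ω x - d ω • G ω x⟫) μ)
    (hint2 : ∀ x : H, Integrable (fun ω => ⟪c ω • T ω x, c ω • T ω x⟫) μ)
    (hint3 : ∀ x : H, Integrable (fun ω => ⟪d ω • G ω x, d ω • G ω x⟫) μ)
    (α β : ℝ) (hα0 : 0 ≤ α) (hα : α < 1 / 2) (hβ0 : 0 ≤ β) (hβ : β < 1 / 2)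
    (hper : ∀ x : H,
      ∫ ω, ⟪c ω • T ω x - d ω • G ω x, c ω • T ω x - d ω • G ω x⟫ ∂μ ≤
        α • ∫ ω, ⟪c ω • T ω x, c ω • T ω x⟫ ∂μ +
          β • ∫ ω, ⟪d ω • G ω x, d ω • G ω x⟫ ∂μ) :
    IsIntegralKOpFrameWith (A := A) μ Ks G
      ((1 - 2 * α) * (⨅ ω, c ω) ^ 2 / (2 * (1 + β) * (⨆ ω, d ω) ^ 2) * a)
      (2 * (1 + α) * (⨆ ω, c ω) ^ 2 / ((1 - 2 * β) * (⨅ ω, d ω) ^ 2) * b) := by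
  obtain ⟨ha, hb, hTf⟩ := hframe
  -- basic facts about the families c, d
  have hΩ : Nonempty Ω := by
    by_contra h
    rw [not_nonempty_iff] at h
    rw [Real.iInf_of_isEmpty] at hc0
    exact lt_irrefl 0 hc0
  have hcbb : BddBelow (Set.range c) := by
    by_contra h
    rw [Real.iInf_of_not_bddBelow h] at hc0
    exact lt_irrefl 0 hc0
  have hdbb : BddBelow (Set.range d) := by
    by_contra h
    rw [Real.iInf_of_not_bddBelow h] at hd0
    exact lt_irrefl 0 hd0
  set mc := ⨅ ω, c ω with hmc
  set Mc := ⨆ ω, c ω with hMc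
  set md := ⨅ ω, d ω with hmd
  set Md := ⨆ ω, d ω with hMd
  have hmc_le : ∀ ω, mc ≤ c ω := fun ω => ciInf_le hcbb ω
  have hc_le : ∀ ω, c ω ≤ Mc := fun ω => le_ciSup hcbdd ω
  have hmd_le : ∀ ω, md ≤ d ω := fun ω => ciInf_le hdbb ω
  have hd_le : ∀ ω, d ω ≤ Md := fun ω => le_ciSup hdbdd ω
  obtain ⟨ω₀⟩ := hΩ
  have hMc0 : 0 < Mc := lt_of_lt_of_le hc0 ((hmc_le ω₀).trans (hc_le ω₀))
  have hMd0 : 0 < Md := lt_of_lt_of_le hd0 ((hmd_le ω₀).trans (hd_le ω₀))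
  have hα2 : (0:ℝ) < 1 - 2 * α := by linarith
  have hβ2 : (0:ℝ) < 1 - 2 * β := by linarith
  have hA0 : 0 < (1 - 2 * α) * mc ^ 2 / (2 * (1 + β) * Md ^ 2) * a :=
    mul_pos (div_pos (mul_pos hα2 (pow_pos hc0 2))
      (mul_pos (by linarith) (pow_pos hMd0 2))) ha
  have hB0 : 0 < 2 * (1 + α) * Mc ^ 2 / ((1 - 2 * β) * md ^ 2) * b :=
    mul_pos (div_pos (mul_pos (by linarith) (pow_pos hMc0 2))
      (mul_pos hβ2 (pow_pos hd0 2))) hb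
  refine ⟨hA0, hB0, fun x => ?_⟩
  obtain ⟨hTint, hTlow, hTup⟩ := hTf x
  refine ⟨hGint x, ?_, ?_⟩
  all_goals {
    -- common setup
    have hPint := hint2 x
    have hQint := hint3 x
    have hRint := hint1 x
    set P := ∫ ω, ⟪c ω • T ω x, c ω • T ω x⟫ ∂μ with hP
    set Q := ∫ ω, ⟪d ω • G ω x, d ω • G ω x⟫ ∂μ with hQ
    set R := ∫ ω, ⟪c ω • T ω x - d ω • G ω x, c ω • T ω x - d ω • G ω x⟫ ∂μ with hR
    have hTnn : ∀ ω : Ω, (0:A) ≤ ⟪T ω x, T ω x⟫ := fun ω => CStarModule.inner_self_nonneg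
    have hGnn : ∀ ω : Ω, (0:A) ≤ ⟪G ω x, G ω x⟫ := fun ω => CStarModule.inner_self_nonneg
    -- P between mc², Mc² multiples of ∫⟪Tx⟫, similarly Q
    have hP_ge : mc ^ 2 • ∫ ω, ⟪T ω x, T ω x⟫ ∂μ ≤ P := by
      rw [← integral_smul]
      refine my_integral_mono (hTint.smul (mc ^ 2)) hPint fun ω => ?_
      rw [my_inner_smul]
      exact my_smul_le_smul_right
        (pow_le_pow_left₀ (le_of_lt hc0) (hmc_le ω) 2) (hTnn ω)
    have hP_le : P ≤ Mc ^ 2 • ∫ ω, ⟪T ω x, T ω x⟫ ∂μ := by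
      rw [← integral_smul]
      refine my_integral_mono hPint (hTint.smul (Mc ^ 2)) fun ω => ?_
      rw [my_inner_smul]
      exact my_smul_le_smul_right
        (pow_le_pow_left₀ (le_of_lt (lt_of_lt_of_le hc0 (hmc_le ω))) (hc_le ω) 2) (hTnn ω)
    have hQ_ge : md ^ 2 • ∫ ω, ⟪G ω x, G ω x⟫ ∂μ ≤ Q := by
      rw [← integral_smul]
      refine my_integral_mono ((hGint x).smul (md ^ 2)) hQint fun ω => ?_
      rw [my_inner_smul]
      exact my_smul_le_smul_right
        (pow_le_pow_left₀ (le_of_lt hd0) (hmd_le ω) 2) (hGnn ω)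
    have hQ_le : Q ≤ Md ^ 2 • ∫ ω, ⟪G ω x, G ω x⟫ ∂μ := by
      rw [← integral_smul]
      refine my_integral_mono hQint ((hGint x).smul (Md ^ 2)) fun ω => ?_
      rw [my_inner_smul]
      exact my_smul_le_smul_right
        (pow_le_pow_left₀ (le_of_lt (lt_of_lt_of_le hd0 (hmd_le ω))) (hd_le ω) 2) (hGnn ω)
    -- parallelogram-type bounds
    have h2R : Integrable (fun ω => (2:ℝ) • ⟪c ω • T ω x - d ω • G ω x, c ω • T ω x - d ω • G ω x⟫) μ := hRint.smul (2:ℝ)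
    have h2Q : Integrable (fun ω => (2:ℝ) • ⟪d ω • G ω x, d ω • G ω x⟫) μ := hQint.smul (2:ℝ)
    have h2P : Integrable (fun ω => (2:ℝ) • ⟪c ω • T ω x, c ω • T ω x⟫) μ := hPint.smul (2:ℝ)
    have hP2 : P ≤ (2:ℝ) • R + (2:ℝ) • Q := by
      have key : ∫ ω, ((2:ℝ) • ⟪c ω • T ω x - d ω • G ω x, c ω • T ω x - d ω • G ω x⟫
          + (2:ℝ) • ⟪d ω • G ω x, d ω • G ω x⟫) ∂μ = (2:ℝ) • R + (2:ℝ) • Q := by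
        rw [integral_add h2R h2Q, integral_smul, integral_smul]
      rw [← key]
      refine my_integral_mono hPint (h2R.add h2Q) fun ω => ?_
      have := my_inner_add_add (A := A) (c ω • T ω x - d ω • G ω x) (d ω • G ω x)
      simpa using this
    have hQ2 : Q ≤ (2:ℝ) • R + (2:ℝ) • P := by
      have key : ∫ ω, ((2:ℝ) • ⟪c ω • T ω x - d ω • G ω x, c ω • T ω x - d ω • G ω x⟫
          + (2:ℝ) • ⟪c ω • T ω x, c ω • T ω x⟫) ∂μ = (2:ℝ) • R + (2:ℝ) • P := by
        rw [integral_add h2R h2P, integral_smul, integral_smul]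
      rw [← key]
      refine my_integral_mono hQint (h2R.add h2P) fun ω => ?_
      have h1 := my_inner_add_add (A := A) (d ω • G ω x - c ω • T ω x) (c ω • T ω x)
      have h2 : ⟪d ω • G ω x - c ω • T ω x, d ω • G ω x - c ω • T ω x⟫ =
          ⟪c ω • T ω x - d ω • G ω x, c ω • T ω x - d ω • G ω x⟫ := by
        rw [← neg_sub (c ω • T ω x), my_inner_neg_neg]
      rw [h2] at h1
      simpa using h1
    have hRle : R ≤ α • P + β • Q := hper x
    have hPnn : (0:A) ≤ P := my_integral_nonneg hPint fun ω => CStarModule.inner_self_nonneg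
    have hQnn : (0:A) ≤ Q := my_integral_nonneg hQint fun ω => CStarModule.inner_self_nonneg
    first
    | -- lower bound goal
      ( have h1 : P ≤ (2*α) • P + (2*β+2) • Q := by
          calc P ≤ (2:ℝ) • R + (2:ℝ) • Q := hP2
            _ ≤ (2:ℝ) • (α • P + β • Q) + (2:ℝ) • Q :=
                add_le_add (my_smul_le_smul (by norm_num) hRle) le_rfl
            _ = (2*α) • P + (2*β+2) • Q := by module
        have h2 : (1 - 2*α) • P ≤ (2*β+2) • Q := by
          rw [← sub_nonneg] at h1 ⊢
          have : (2*β+2) • Q - (1 - 2*α) • P = (2*α) • P + (2*β+2) • Q - P := by module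
          rw [this]; exact h1
        have h3 : ((1 - 2*α) * mc ^ 2 * a) • ⟪Ks x, Ks x⟫ ≤ (2*β+2) • Q := by
          calc ((1 - 2*α) * mc ^ 2 * a) • ⟪Ks x, Ks x⟫
              = (1 - 2*α) • (mc ^ 2 • (a • ⟪Ks x, Ks x⟫)) := by module
            _ ≤ (1 - 2*α) • (mc ^ 2 • ∫ ω, ⟪T ω x, T ω x⟫ ∂μ) :=
                my_smul_le_smul hα2.le (my_smul_le_smul (by positivity) hTlow)
            _ ≤ (1 - 2*α) • P := my_smul_le_smul hα2.le hP_ge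
            _ ≤ (2*β+2) • Q := h2
        have h4 : ((1 - 2*α) * mc ^ 2 * a) • ⟪Ks x, Ks x⟫ ≤
            ((2*β+2) * Md ^ 2) • ∫ ω, ⟪G ω x, G ω x⟫ ∂μ := by
          refine h3.trans ?_
          have := my_smul_le_smul (t := (2*β+2)) (by linarith) hQ_le
          rwa [smul_smul] at this
        have hden : (0:ℝ) < (2*β+2) * Md ^ 2 :=
          mul_pos (by linarith) (pow_pos hMd0 2)
        have h5 := my_smul_le_smul (t := ((2*β+2) * Md ^ 2)⁻¹)
          (inv_nonneg.2 hden.le) h4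
        rw [smul_smul, smul_smul, inv_mul_cancel₀ hden.ne', one_smul] at h5
        have hconst : (1 - 2 * α) * mc ^ 2 / (2 * (1 + β) * Md ^ 2) * a =
            ((2*β+2) * Md ^ 2)⁻¹ * ((1 - 2*α) * mc ^ 2 * a) := by
          have hden2 : (2*(1+β)*Md^2) ≠ 0 := by positivity
          rw [inv_mul_eq_div, div_mul_eq_mul_div, div_eq_div_iff hden2 hden.ne']
          ring
        rw [hconst]
        exact h5 )
    | -- upper bound goal
      ( have h1 : Q ≤ (2*β) • Q + (2*α+2) • P := by
          calc Q ≤ (2:ℝ) • R + (2:ℝ) • P := hQ2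
            _ ≤ (2:ℝ) • (α • P + β • Q) + (2:ℝ) • P :=
                add_le_add (my_smul_le_smul (by norm_num) hRle) le_rfl
            _ = (2*β) • Q + (2*α+2) • P := by module
        have h2 : (1 - 2*β) • Q ≤ (2*α+2) • P := by
          rw [← sub_nonneg] at h1 ⊢
          have : (2*α+2) • P - (1 - 2*β) • Q = (2*β) • Q + (2*α+2) • P - Q := by module
          rw [this]; exact h1
        have h3 : ((1 - 2*β) * md ^ 2) • ∫ ω, ⟪G ω x, G ω x⟫ ∂μ ≤
            ((2*α+2) * Mc ^ 2 * b) • ⟪x, x⟫ := by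
          calc ((1 - 2*β) * md ^ 2) • ∫ ω, ⟪G ω x, G ω x⟫ ∂μ
              = (1 - 2*β) • (md ^ 2 • ∫ ω, ⟪G ω x, G ω x⟫ ∂μ) := by module
            _ ≤ (1 - 2*β) • Q := my_smul_le_smul hβ2.le hQ_ge
            _ ≤ (2*α+2) • P := h2
            _ ≤ (2*α+2) • (Mc ^ 2 • ∫ ω, ⟪T ω x, T ω x⟫ ∂μ) :=
                my_smul_le_smul (by linarith) hP_le
            _ ≤ (2*α+2) • (Mc ^ 2 • (b • ⟪x, x⟫)) :=
                my_smul_le_smul (by linarith) (my_smul_le_smul (by positivity) hTup)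
            _ = ((2*α+2) * Mc ^ 2 * b) • ⟪x, x⟫ := by module
        have hden : (0:ℝ) < (1 - 2*β) * md ^ 2 := mul_pos hβ2 (pow_pos hd0 2)
        have h5 := my_smul_le_smul (t := ((1 - 2*β) * md ^ 2)⁻¹)
          (inv_nonneg.2 hden.le) h3
        rw [smul_smul, smul_smul, inv_mul_cancel₀ hden.ne', one_smul] at h5
        have hconst : 2 * (1 + α) * Mc ^ 2 / ((1 - 2 * β) * md ^ 2) * b =
            ((1 - 2*β) * md ^ 2)⁻¹ * ((2*α+2) * Mc ^ 2 * b) := by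
          rw [inv_mul_eq_div, div_mul_eq_mul_div, div_eq_div_iff hden.ne' hden.ne']
          ring
        rw [hconst]
        exact h5 )
  }
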